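/- Let f₁, g₁ be continuous on [t₀, τ₀) with f₁(t) ≥ 0. If y is a solution of the Riccati equation y' + f₁(t)y² + g₁(t) = 0 whose maximal interval of existence inside (t₀, τ₀) is (t₁, t₂) with t₀ < t₁ < t₂ < τ₀, then y(t) → -∞ as t → t₂⁻ and y(t) → +∞ as t → t₁⁺. -/

import Mathlib

open Set Filter Topology

/-- Local existence for the Riccati ODE at an interior point. -/
lemma riccati_local (t₀ τ₀ : ℝ) (f g : ℝ → ℝ)
    (hf : ContinuousOn f (Ico t₀ τ₀)) (hg : ContinuousOn g (Ico t₀ τ₀))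
    (c : ℝ) (hc : c ∈ Ioo t₀ τ₀) (x₀ : ℝ) :
    ∃ ε > (0:ℝ), t₀ < c - ε ∧ c + ε < τ₀ ∧ ∃ sol : ℝ → ℝ, sol c = x₀ ∧
      ∀ t ∈ Icc (c - ε) (c + ε),
        HasDerivWithinAt sol (-(f t * sol t ^ 2 + g t)) (Icc (c - ε) (c + ε)) t := by
  set a := (t₀ + c) / 2 with ha_def
  set b := (c + τ₀) / 2 with hb_def
  have ha : t₀ < a := by simp only [ha_def]; linarith [hc.1]
  have hac : a < c := by simp only [ha_def]; linarith [hc.1]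
  have hcb : c < b := by simp only [hb_def]; linarith [hc.2]
  have hbτ : b < τ₀ := by simp only [hb_def]; linarith [hc.2]
  have hab : Icc a b ⊆ Ico t₀ τ₀ := fun x hx => ⟨by linarith [hx.1], by linarith [hx.2]⟩
  obtain ⟨Mf, hMf⟩ := isCompact_Icc.exists_bound_of_continuousOn (hf.mono hab)
  obtain ⟨Mg, hMg⟩ := isCompact_Icc.exists_bound_of_continuousOn (hg.mono hab)
  set Mf' := max Mf 0 with hMf'_def
  set Mg' := max Mg 0 with hMg'_def
  have hMf'0 : 0 ≤ Mf' := le_max_right _ _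
  have hMg'0 : 0 ≤ Mg' := le_max_right _ _
  have hMf' : ∀ x ∈ Icc a b, |f x| ≤ Mf' := fun x hx =>
    le_trans (by simpa using hMf x hx) (le_max_left _ _)
  have hMg' : ∀ x ∈ Icc a b, |g x| ≤ Mg' := fun x hx =>
    le_trans (by simpa using hMg x hx) (le_max_left _ _)
  set A := |x₀| + 1 with hA_def
  have hA0 : 0 < A := by positivity
  set C := Mf' * A ^ 2 + Mg' with hC_def
  have hC0 : 0 ≤ C := by positivity
  set ε := min (min (c - a) (b - c)) (1 / (C + 1)) with hε_def
  have hε : 0 < ε := by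
    apply lt_min (lt_min (by linarith) (by linarith))
    positivity
  have hεa : ε ≤ c - a := le_trans (min_le_left _ _) (min_le_left _ _)
  have hεb : ε ≤ b - c := le_trans (min_le_left _ _) (min_le_right _ _)
  have hεC : ε ≤ 1 / (C + 1) := min_le_right _ _
  have hsub : Icc (c - ε) (c + ε) ⊆ Icc a b := fun x hx =>
    ⟨by linarith [hx.1], by linarith [hx.2]⟩
  have hball : ∀ x ∈ Metric.closedBall x₀ (1:ℝ), |x| ≤ A := by
    intro x hx
    rw [Metric.mem_closedBall, Real.dist_eq] at hx
    rw [hA_def]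
    calc |x| = |x₀ + (x - x₀)| := by ring_nf
    _ ≤ |x₀| + |x - x₀| := abs_add_le _ _
    _ ≤ |x₀| + 1 := by linarith
  have hpl : IsPicardLindelof (fun t x => -(f t * x ^ 2 + g t)) (tmin := c - ε) (tmax := c + ε)
      ⟨c, by linarith, by linarith⟩ x₀ 1 0 (Real.toNNReal C) (Real.toNNReal (Mf' * (2 * A))) := by
    constructor
    · intro t ht
      rw [lipschitzOnWith_iff_dist_le_mul]
      intro x hx x' hx'
      have hft : |f t| ≤ Mf' := hMf' t (hsub ht)
      have hxA : |x| ≤ A := hball x (by simpa using hx)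
      have hx'A : |x'| ≤ A := hball x' (by simpa using hx')
      rw [Real.dist_eq, Real.dist_eq]
      have : -(f t * x ^ 2 + g t) - -(f t * x' ^ 2 + g t) = f t * (x + x') * (x' - x) := by ring
      rw [this, Real.coe_toNNReal _ (by positivity)]
      rw [abs_mul, abs_mul]
      have h1 : |x + x'| ≤ 2 * A := by
        calc |x + x'| ≤ |x| + |x'| := abs_add_le _ _
        _ ≤ 2 * A := by linarith
      have h2 : |x' - x| = |x - x'| := abs_sub_comm _ _
      rw [h2]
      have key : |f t| * |x + x'| ≤ Mf' * (2 * A) := mul_le_mul hft h1 (abs_nonneg _) hMf'0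
      exact mul_le_mul_of_nonneg_right key (abs_nonneg _)
    · intro x _
      exact (((hf.mono (hsub.trans hab)).mul continuousOn_const).add (hg.mono (hsub.trans hab))).neg
    · intro t ht x hx
      have hft : |f t| ≤ Mf' := hMf' t (hsub ht)
      have hgt : |g t| ≤ Mg' := hMg' t (hsub ht)
      have hxA : |x| ≤ A := hball x (by simpa using hx)
      rw [Real.norm_eq_abs, abs_neg, Real.coe_toNNReal _ hC0]
      calc |f t * x ^ 2 + g t| ≤ |f t * x ^ 2| + |g t| := abs_add_le _ _
      _ = |f t| * |x| ^ 2 + |g t| := by rw [abs_mul, abs_pow]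
      _ ≤ Mf' * A ^ 2 + Mg' := by
          have : |x| ^ 2 ≤ A ^ 2 := by nlinarith [abs_nonneg x]
          nlinarith [abs_nonneg (f t), abs_nonneg x, sq_nonneg x]
    · have : max ((c + ε) - c) (c - (c - ε)) = ε := by
        rw [add_sub_cancel_left, sub_sub_cancel, max_self]
      show (Real.toNNReal C : ℝ) * max ((c + ε) - c) (c - (c - ε)) ≤ ((1:NNReal):ℝ) - ((0:NNReal):ℝ)
      rw [this, Real.coe_toNNReal _ hC0, NNReal.coe_one, NNReal.coe_zero, sub_zero]
      calc C * ε ≤ C * (1 / (C + 1)) := mul_le_mul_of_nonneg_left hεC hC0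
      _ = C / (C + 1) := by ring
      _ ≤ 1 := div_le_one_of_le₀ (by linarith) (by linarith)
  obtain ⟨sol, hsol0, hsol⟩ := hpl.exists_eq_forall_mem_Icc_hasDerivWithinAt₀
  exact ⟨ε, hε, by linarith, by linarith, sol, hsol0, hsol⟩


/-- If `(t₁,t₂) ⊂ (t₀,τ₀)` is the maximal existence interval of a solution `y` of the
Riccati equation `y' + f y² + g = 0` with `f ≥ 0`, then `y → -∞` at `t₂⁻` and
`y → +∞` at `t₁⁺`. -/
theorem riccati_blowup_at_maximal_endpoints
    (t₀ τ₀ : ℝ) (f g : ℝ → ℝ)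
    (hf : ContinuousOn f (Ico t₀ τ₀)) (hg : ContinuousOn g (Ico t₀ τ₀))
    (hf0 : ∀ t ∈ Ico t₀ τ₀, 0 ≤ f t)
    (t₁ t₂ : ℝ) (h01 : t₀ < t₁) (h12 : t₁ < t₂) (h2τ : t₂ < τ₀)
    (y : ℝ → ℝ)
    (hy : ∀ t ∈ Ioo t₁ t₂, HasDerivAt y (-(f t * y t ^ 2 + g t)) t)
    -- maximality: any solution on an interval `(s₁,s₂) ⊆ (t₀,τ₀)` containing `(t₁,t₂)`
    -- and agreeing with `y` on `(t₁,t₂)` forces `s₁ = t₁` and `s₂ = t₂`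
    (hmax : ∀ s₁ s₂ : ℝ, t₀ ≤ s₁ → s₁ ≤ t₁ → t₂ ≤ s₂ → s₂ ≤ τ₀ →
      (∃ z : ℝ → ℝ, (∀ t ∈ Ioo t₁ t₂, z t = y t) ∧
        ∀ t ∈ Ioo s₁ s₂, HasDerivAt z (-(f t * z t ^ 2 + g t)) t) →
      s₁ = t₁ ∧ s₂ = t₂) :
    Tendsto y (nhdsWithin t₂ (Iio t₂)) atBot ∧
    Tendsto y (nhdsWithin t₁ (Ioi t₁)) atTop := by
  have hIoosub : Ioo t₀ τ₀ ⊆ Ico t₀ τ₀ := Ioo_subset_Ico_self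
  have hfc : ∀ t ∈ Ioo t₀ τ₀, ContinuousAt f t := fun t ht =>
    (hf.mono hIoosub).continuousAt (isOpen_Ioo.mem_nhds ht)
  have hgc : ∀ t ∈ Ioo t₀ τ₀, ContinuousAt g t := fun t ht =>
    (hg.mono hIoosub).continuousAt (isOpen_Ioo.mem_nhds ht)
  have ht₁ : t₁ ∈ Ioo t₀ τ₀ := ⟨h01, h12.trans h2τ⟩
  have ht₂ : t₂ ∈ Ioo t₀ τ₀ := ⟨h01.trans h12, h2τ⟩
  have hsub12 : Ioo t₁ t₂ ⊆ Ioo t₀ τ₀ := Ioo_subset_Ioo h01.le h2τ.le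
  set G := fun t => ∫ s in t₁..t, g s with hG_def
  have hG : ∀ t ∈ Ioo t₀ τ₀, HasDerivAt G (g t) t := by
    intro t ht
    apply intervalIntegral.integral_hasDerivAt_right
    · apply ContinuousOn.intervalIntegrable
      exact (hg.mono hIoosub).mono (Set.ordConnected_Ioo.uIcc_subset ht₁ ht)
    · exact (hg.mono hIoosub).stronglyMeasurableAtFilter isOpen_Ioo t ht
    · exact hgc t ht
  set w := fun t => y t + G t with hw_def
  have hw : ∀ t ∈ Ioo t₁ t₂, HasDerivAt w (-(f t * y t ^ 2)) t := by
    intro t ht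
    have h := (hy t ht).add (hG t (hsub12 ht))
    exact h.congr_deriv (by ring)
  have hwc : ContinuousOn w (Ioo t₁ t₂) := fun t ht =>
    (hw t ht).continuousAt.continuousWithinAt
  have hA : AntitoneOn w (Ioo t₁ t₂) := by
    refine antitoneOn_of_deriv_nonpos (convex_Ioo _ _) hwc ?_ ?_
    · intro x hx
      rw [interior_Ioo] at hx
      exact (hw x hx).differentiableAt.differentiableWithinAt
    · intro x hx
      rw [interior_Ioo] at hx
      rw [(hw x hx).deriv]
      have h0 : 0 ≤ f x := hf0 x (hIoosub (hsub12 hx))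
      nlinarith [sq_nonneg (y x)]
  have hne : (Ioo t₁ t₂).Nonempty := nonempty_Ioo.2 h12
  constructor
  · -- blow down at t₂
    by_cases hbdd : BddBelow (w '' Ioo t₁ t₂)
    · exfalso
      have hwlim : Tendsto w (𝓝[<] t₂) (𝓝 (sInf (w '' Ioo t₁ t₂))) :=
        hA.tendsto_nhdsWithin_Ioo_left hne hbdd
      set y₂ := sInf (w '' Ioo t₁ t₂) - G t₂ with hy₂_def
      have hGc2 : Tendsto G (𝓝[<] t₂) (𝓝 (G t₂)) :=
        ((hG t₂ ht₂).continuousAt.tendsto).mono_left nhdsWithin_le_nhds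
      have hylim : Tendsto y (𝓝[<] t₂) (𝓝 y₂) := by
        have h := hwlim.sub hGc2
        refine h.congr (fun t => ?_)
        simp only [hw_def]
        ring
      obtain ⟨ε, hε, hε1, hε2, sol, hsolc, hsol⟩ := riccati_local t₀ τ₀ f g hf hg t₂ ht₂ y₂
      set z := fun t => if t < t₂ then y t else sol t with hz_def
      have hz_eq_y : ∀ t ∈ Ioo t₁ t₂, z t = y t := fun t ht => if_pos ht.2
      have hzt₂ : z t₂ = y₂ := by
        simp only [hz_def, lt_irrefl, if_false, hsolc]
      have hz1 : ∀ t ∈ Ioo t₁ t₂, HasDerivAt z (-(f t * z t ^ 2 + g t)) t := by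
        intro t ht
        have hev : z =ᶠ[𝓝 t] y := eventually_of_mem (Iio_mem_nhds ht.2) (fun s hs => if_pos hs)
        rw [hz_eq_y t ht]
        exact (hy t ht).congr_of_eventuallyEq hev
      have hz2 : ∀ t ∈ Ioo t₂ (t₂ + ε), HasDerivAt z (-(f t * z t ^ 2 + g t)) t := by
        intro t ht
        have hmem : t ∈ Ioo (t₂ - ε) (t₂ + ε) := ⟨by linarith [ht.1], ht.2⟩
        have hev : z =ᶠ[𝓝 t] sol :=
          eventually_of_mem (Ioi_mem_nhds ht.1) (fun s hs => if_neg (not_lt.2 (le_of_lt hs)))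
        have hzt : z t = sol t := if_neg (not_lt.2 ht.1.le)
        rw [hzt]
        exact ((hsol t (Ioo_subset_Icc_self hmem)).hasDerivAt
          (Icc_mem_nhds hmem.1 hmem.2)).congr_of_eventuallyEq hev
      have hder₂ : HasDerivAt z (-(f t₂ * z t₂ ^ 2 + g t₂)) t₂ := by
        rw [hzt₂]
        have hright : HasDerivWithinAt z (-(f t₂ * y₂ ^ 2 + g t₂)) (Ici t₂) t₂ := by
          have h1 := (hsol t₂ ⟨by linarith, by linarith⟩).mono_of_mem_nhdsWithin
            (Icc_mem_nhdsGE_of_mem ⟨by linarith, by linarith⟩)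
          rw [hsolc] at h1
          exact h1.congr (fun s hs => if_neg (not_lt.2 hs)) (if_neg (lt_irrefl t₂))
        have hleft : HasDerivWithinAt z (-(f t₂ * y₂ ^ 2 + g t₂)) (Iic t₂) t₂ := by
          apply hasDerivWithinAt_Iic_of_tendsto_deriv (s := Ioo t₁ t₂)
          · exact fun s hs => (hz1 s hs).differentiableAt.differentiableWithinAt
          · have h2 : Tendsto z (𝓝[Ioo t₁ t₂] t₂) (𝓝 y₂) := by
              refine (hylim.mono_left (nhdsWithin_mono _ Ioo_subset_Iio_self)).congr' ?_
              filter_upwards [self_mem_nhdsWithin] with s hs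
              exact (hz_eq_y s hs).symm
            rw [ContinuousWithinAt, hzt₂]
            exact h2
          · exact Ioo_mem_nhdsLT_of_mem ⟨h12, le_refl t₂⟩
          · have hfT : Tendsto f (𝓝[<] t₂) (𝓝 (f t₂)) :=
              ((hfc t₂ ht₂).tendsto).mono_left nhdsWithin_le_nhds
            have hgT : Tendsto g (𝓝[<] t₂) (𝓝 (g t₂)) :=
              ((hgc t₂ ht₂).tendsto).mono_left nhdsWithin_le_nhds
            have htt : Tendsto (fun s => -(f s * y s ^ 2 + g s)) (𝓝[<] t₂)
                (𝓝 (-(f t₂ * y₂ ^ 2 + g t₂))) := ((hfT.mul (hylim.pow 2)).add hgT).neg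
            refine htt.congr' ?_
            filter_upwards [Ioo_mem_nhdsLT_of_mem ⟨h12, le_refl t₂⟩] with s hs
            rw [(hz1 s hs).deriv, hz_eq_y s hs]
        have h3 := hleft.union hright
        rw [Iic_union_Ici] at h3
        exact h3.hasDerivAt univ_mem
      have hz : ∀ t ∈ Ioo t₁ (t₂ + ε), HasDerivAt z (-(f t * z t ^ 2 + g t)) t := by
        intro t ht
        rcases lt_trichotomy t t₂ with h | h | h
        · exact hz1 t ⟨ht.1, h⟩
        · rw [h]; exact hder₂
        · exact hz2 t ⟨h, ht.2⟩
      have hcon := hmax t₁ (t₂ + ε) h01.le le_rfl (by linarith) (by linarith) ⟨z, hz_eq_y, hz⟩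
      linarith [hcon.2]
    · have hwbot : Tendsto w (𝓝[<] t₂) atBot := by
        rw [tendsto_atBot]
        intro b
        rw [not_bddBelow_iff] at hbdd
        obtain ⟨u, hu, hub⟩ := hbdd b
        obtain ⟨s, hs, rfl⟩ := hu
        filter_upwards [Ioo_mem_nhdsLT hs.2] with r hr
        exact le_of_lt (lt_of_le_of_lt (hA hs ⟨hs.1.trans hr.1, hr.2⟩ hr.1.le) hub)
      have hGc2 : Tendsto (fun t => -G t) (𝓝[<] t₂) (𝓝 (-G t₂)) :=
        (((hG t₂ ht₂).continuousAt.tendsto).mono_left nhdsWithin_le_nhds).neg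
      have h := hGc2.add_atBot hwbot
      refine h.congr (fun t => ?_)
      simp only [hw_def]
      ring
  · -- blow up at t₁
    by_cases hbdd : BddAbove (w '' Ioo t₁ t₂)
    · exfalso
      have hwlim : Tendsto w (𝓝[>] t₁) (𝓝 (sSup (w '' Ioo t₁ t₂))) :=
        hA.tendsto_nhdsWithin_Ioo_right hne hbdd
      set y₁ := sSup (w '' Ioo t₁ t₂) - G t₁ with hy₁_def
      have hGc1 : Tendsto G (𝓝[>] t₁) (𝓝 (G t₁)) :=
        ((hG t₁ ht₁).continuousAt.tendsto).mono_left nhdsWithin_le_nhds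
      have hylim : Tendsto y (𝓝[>] t₁) (𝓝 y₁) := by
        have h := hwlim.sub hGc1
        refine h.congr (fun t => ?_)
        simp only [hw_def]
        ring
      obtain ⟨ε, hε, hε1, hε2, sol, hsolc, hsol⟩ := riccati_local t₀ τ₀ f g hf hg t₁ ht₁ y₁
      set z := fun t => if t₁ < t then y t else sol t with hz_def
      have hz_eq_y : ∀ t ∈ Ioo t₁ t₂, z t = y t := fun t ht => if_pos ht.1
      have hzt₁ : z t₁ = y₁ := by
        simp only [hz_def, lt_irrefl, if_false, hsolc]
      have hz1 : ∀ t ∈ Ioo t₁ t₂, HasDerivAt z (-(f t * z t ^ 2 + g t)) t := by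
        intro t ht
        have hev : z =ᶠ[𝓝 t] y := eventually_of_mem (Ioi_mem_nhds ht.1) (fun s hs => if_pos hs)
        rw [hz_eq_y t ht]
        exact (hy t ht).congr_of_eventuallyEq hev
      have hz2 : ∀ t ∈ Ioo (t₁ - ε) t₁, HasDerivAt z (-(f t * z t ^ 2 + g t)) t := by
        intro t ht
        have hmem : t ∈ Ioo (t₁ - ε) (t₁ + ε) := ⟨ht.1, by linarith [ht.2]⟩
        have hev : z =ᶠ[𝓝 t] sol :=
          eventually_of_mem (Iio_mem_nhds ht.2) (fun s hs => if_neg (not_lt.2 (le_of_lt hs)))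
        have hzt : z t = sol t := if_neg (not_lt.2 ht.2.le)
        rw [hzt]
        exact ((hsol t (Ioo_subset_Icc_self hmem)).hasDerivAt
          (Icc_mem_nhds hmem.1 hmem.2)).congr_of_eventuallyEq hev
      have hder₁ : HasDerivAt z (-(f t₁ * z t₁ ^ 2 + g t₁)) t₁ := by
        rw [hzt₁]
        have hleft : HasDerivWithinAt z (-(f t₁ * y₁ ^ 2 + g t₁)) (Iic t₁) t₁ := by
          have h1 := (hsol t₁ ⟨by linarith, by linarith⟩).mono_of_mem_nhdsWithin
            (Icc_mem_nhdsLE_of_mem ⟨by linarith, by linarith⟩)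
          rw [hsolc] at h1
          exact h1.congr (fun s hs => if_neg (not_lt.2 hs)) (if_neg (lt_irrefl t₁))
        have hright : HasDerivWithinAt z (-(f t₁ * y₁ ^ 2 + g t₁)) (Ici t₁) t₁ := by
          apply hasDerivWithinAt_Ici_of_tendsto_deriv (s := Ioo t₁ t₂)
          · exact fun s hs => (hz1 s hs).differentiableAt.differentiableWithinAt
          · have h2 : Tendsto z (𝓝[Ioo t₁ t₂] t₁) (𝓝 y₁) := by
              refine (hylim.mono_left (nhdsWithin_mono _ Ioo_subset_Ioi_self)).congr' ?_
              filter_upwards [self_mem_nhdsWithin] with s hs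
              exact (hz_eq_y s hs).symm
            rw [ContinuousWithinAt, hzt₁]
            exact h2
          · exact Ioo_mem_nhdsGT_of_mem ⟨le_refl t₁, h12⟩
          · have hfT : Tendsto f (𝓝[>] t₁) (𝓝 (f t₁)) :=
              ((hfc t₁ ht₁).tendsto).mono_left nhdsWithin_le_nhds
            have hgT : Tendsto g (𝓝[>] t₁) (𝓝 (g t₁)) :=
              ((hgc t₁ ht₁).tendsto).mono_left nhdsWithin_le_nhds
            have htt : Tendsto (fun s => -(f s * y s ^ 2 + g s)) (𝓝[>] t₁)
                (𝓝 (-(f t₁ * y₁ ^ 2 + g t₁))) := ((hfT.mul (hylim.pow 2)).add hgT).neg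
            refine htt.congr' ?_
            filter_upwards [Ioo_mem_nhdsGT_of_mem ⟨le_refl t₁, h12⟩] with s hs
            rw [(hz1 s hs).deriv, hz_eq_y s hs]
        have h3 := hleft.union hright
        rw [Iic_union_Ici] at h3
        exact h3.hasDerivAt univ_mem
      have hz : ∀ t ∈ Ioo (t₁ - ε) t₂, HasDerivAt z (-(f t * z t ^ 2 + g t)) t := by
        intro t ht
        rcases lt_trichotomy t t₁ with h | h | h
        · exact hz2 t ⟨ht.1, h⟩
        · rw [h]; exact hder₁
        · exact hz1 t ⟨h, ht.2⟩
      have hcon := hmax (t₁ - ε) t₂ (by linarith) (by linarith) le_rfl h2τ.le ⟨z, hz_eq_y, hz⟩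
      linarith [hcon.1]
    · have hwtop : Tendsto w (𝓝[>] t₁) atTop := by
        rw [tendsto_atTop]
        intro b
        rw [not_bddAbove_iff] at hbdd
        obtain ⟨u, hu, hub⟩ := hbdd b
        obtain ⟨s, hs, rfl⟩ := hu
        filter_upwards [Ioo_mem_nhdsGT hs.1] with r hr
        exact le_of_lt (lt_of_lt_of_le hub (hA ⟨hr.1, hr.2.trans hs.2⟩ hs hr.2.le))
      have hGc1 : Tendsto (fun t => -G t) (𝓝[>] t₁) (𝓝 (-G t₁)) :=
        (((hG t₁ ht₁).continuousAt.tendsto).mono_left nhdsWithin_le_nhds).neg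
      have h := hGc1.add_atTop hwtop
      refine h.congr (fun t => ?_)
      simp only [hw_def]
      ring
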